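/- The minimum DFA recognizing L_UNIQ over an alphabet of size n ≥ 1 has at least 2^{n-1} states; equivalently, there exist 2^{n-1} pairwise Myhill–Nerode-inequivalent strings with respect to L_UNIQ. -/

import Mathlib

variable {α : Type*}

/-- The `$`-delimited version of a string over `α`; `none` plays the role of `$`. -/
def delim (w : List α) : List (Option α) :=
  none :: (w.map some ++ [none])

/-- The bigram count vector of `$w$`, as the multiset of adjacent ordered pairs
(multiset equality is the same as equality of all bigram counts). -/
def bigrams (w : List α) : Multiset (Option α × Option α) :=
  ((delim w).zip (delim w).tail : List (Option α × Option α))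

/-- A string is uniquely decodable if `$w$` is the only delimited string with its
bigram count vector. -/
def UniqDec (w : List α) : Prop :=
  ∀ v : List α, bigrams v = bigrams w → v = w

section pairs
variable {β : Type*}

def pairs : List β → Multiset (β × β)
  | [] => 0
  | [_] => 0
  | a :: b :: l => (a, b) ::ₘ pairs (b :: l)

@[simp] lemma pairs_nil : pairs ([] : List β) = 0 := rfl
@[simp] lemma pairs_single (a : β) : pairs [a] = 0 := rfl
@[simp] lemma pairs_cons_cons (a b : β) (l : List β) :
    pairs (a :: b :: l) = (a, b) ::ₘ pairs (b :: l) := rfl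

lemma zip_tail_eq_pairs (l : List β) :
    ((l.zip l.tail : List (β × β)) : Multiset (β × β)) = pairs l := by
  induction l with
  | nil => simp
  | cons a l ih => cases l with
    | nil => simp
    | cons b t =>
        show ((a,b) ::ₘ ((b::t).zip t : List (β×β)) : Multiset _) = _
        rw [show ((b::t).zip t) = ((b::t).zip (b::t).tail) from rfl, ih]; rfl

lemma bigrams_eq_pairs (w : List α) :
    bigrams w = pairs (none :: (w.map some ++ [none])) := by
  rw [bigrams, delim, zip_tail_eq_pairs]

lemma pairs_middle : ∀ (l1 : List β) (c : β) (l2 : List β),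
    pairs (l1 ++ c :: l2) = pairs (l1 ++ [c]) + pairs (c :: l2)
  | [], c, l2 => by simp
  | [x], c, l2 => by simp
  | x :: y :: l1, c, l2 => by
      have := pairs_middle (y :: l1) c l2
      simp only [List.cons_append] at *
      rw [pairs_cons_cons, pairs_cons_cons, this, Multiset.cons_add]

lemma pairs_cons_ne (x : β) {l : List β} (h : l ≠ []) :
    pairs (x :: l) = (x, l.head h) ::ₘ pairs l := by
  cases l with
  | nil => exact absurd rfl h
  | cons b t => simp

lemma pairs_fst_mem : ∀ {l : List β} {p : β × β}, p ∈ pairs l → p.1 ∈ l.dropLast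
  | a :: b :: l, p, hp => by
    rw [pairs_cons_cons, Multiset.mem_cons] at hp
    rcases hp with h | h
    · subst h; simp
    · have := pairs_fst_mem h
      rcases l with _ | ⟨c, l⟩
      · simp at this
      · simp only [List.dropLast_cons₂, List.mem_cons] at this ⊢
        tauto

lemma step' {L : List β} {P : Multiset (β × β)} {x : β} [DecidableEq β]
    (hh : L.head? = some x) (hp : pairs L = P) (h0 : P ≠ 0) :
    ∃ y L', L = x :: y :: L' ∧ pairs (y :: L') = P.erase (x, y) ∧ (x, y) ∈ P := by
  cases L with
  | nil => simp at hh
  | cons a t =>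
    obtain rfl : a = x := by simpa using hh
    cases t with
    | nil => exact absurd (hp.symm.trans rfl) h0
    | cons y L' =>
      refine ⟨y, L', rfl, ?_, ?_⟩
      · rw [← hp, pairs_cons_cons, Multiset.erase_cons_head]
      · rw [← hp]; simp

lemma pairs_eq_zero_iff {L : List β} {x : β} (hh : L.head? = some x)
    (hp : pairs L = 0) : L = [x] := by
  cases L with
  | nil => simp at hh
  | cons a t =>
    obtain rfl : a = x := by simpa using hh
    cases t with
    | nil => rfl
    | cons y L' => simp [pairs_cons_cons] at hp

end pairs

section chain
variable {β : Type*} [DecidableEq β]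

lemma chain_peel : ∀ (C : List β) {M L : List β}, M ≠ [] → C.Nodup →
    (∀ c ∈ C, c ∉ M.dropLast) → L.head? = (C ++ M).head? →
    pairs L = pairs (C ++ M) →
    ∃ L', L = C ++ L' ∧ L'.head? = M.head? ∧ pairs L' = pairs M
  | [], M, L, hM, _, _, hh, hp => by
    refine ⟨L, rfl, hh, ?_⟩
    simpa using hp
  | c :: C', M, L, hM, hnd, hCM, hh, hp => by
    have hne : C' ++ M ≠ [] := by
      intro h; exact hM (List.append_eq_nil_iff.mp h).2
    have hhd : L.head? = some c := by simpa using hh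
    have hP0 : pairs ((c :: C') ++ M) ≠ 0 := by
      rw [List.cons_append, pairs_cons_ne c hne]
      simp
    obtain ⟨y, L'', hL, hpair, hmem⟩ := step' hhd hp hP0
    have hdecomp : pairs ((c :: C') ++ M)
        = (c, (C' ++ M).head hne) ::ₘ pairs (C' ++ M) := by
      rw [List.cons_append, pairs_cons_ne c hne]
    have hy : y = (C' ++ M).head hne := by
      rw [hdecomp, Multiset.mem_cons] at hmem
      rcases hmem with h | h
      · exact (Prod.mk.injEq _ _ _ _ ▸ h).2
      · exfalso
        have := pairs_fst_mem h
        rw [List.dropLast_append_of_ne_nil hM] at this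
        simp only [List.mem_append] at this
        rcases this with h' | h'
        · exact (List.nodup_cons.mp hnd).1 h'
        · exact hCM c (by simp) h'
    subst hy
    rw [hdecomp, Multiset.erase_cons_head] at hpair
    have hh' : (((C' ++ M).head hne) :: L'').head? = (C' ++ M).head? := by
      rw [List.head?_cons, List.head?_eq_head hne]
    obtain ⟨L', hL', hh2, hp2⟩ := chain_peel C' hM (List.nodup_cons.mp hnd).2
      (fun d hd => hCM d (by simp [hd])) hh' hpair
    exact ⟨L', by rw [hL, hL', List.cons_append], hh2, hp2⟩
end chain

section uniq
variable {α : Type*} [DecidableEq α]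

lemma head_append_eq (C : List β) (x : β) (r : List β) (h1 : C ++ [x] ≠ []) (h2 : C ++ x :: r ≠ []) :
    (C ++ [x]).head h1 = (C ++ x :: r).head h2 := by
  cases C <;> simp

lemma uniq_side (b0 a : α) (l : List α) (hnd : l.Nodup) (hb : b0 ∉ l) (ha : a ∉ l)
    (hab : a ≠ b0) : UniqDec (b0 :: l ++ [b0, a, a]) := by
  intro w' hbig
  set sb : Option α := some b0 with hsb
  set sa : Option α := some a with hsa
  set C : List (Option α) := l.map some with hC
  -- the delimited target
  have htgt : (none :: ((b0 :: l ++ [b0, a, a]).map some ++ [none]) : List (Option α))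
      = none :: sb :: (C ++ [sb, sa, sa, none]) := by simp [hC, hsb, hsa]
  rw [bigrams_eq_pairs, bigrams_eq_pairs, htgt] at hbig
  set L : List (Option α) := none :: (w'.map some ++ [none]) with hL
  -- basic facts
  have hCnone : (none : Option α) ∉ C := by simp [hC]
  have hCsb : sb ∉ C := by
    intro hmem
    obtain ⟨x, hx, he⟩ := List.mem_map.mp (hC ▸ hmem)
    rw [hsb] at he; obtain rfl := Option.some.inj he; exact hb hx
  have hCsa : sa ∉ C := by
    intro hmem
    obtain ⟨x, hx, he⟩ := List.mem_map.mp (hC ▸ hmem)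
    rw [hsa] at he; obtain rfl := Option.some.inj he; exact ha hx
  have hsbsa : sb ≠ sa := by simp [hsb, hsa]; exact fun h => hab h.symm
  -- chain pairs
  set CP : Multiset (Option α × Option α) := pairs (sb :: C ++ [sb]) with hCP
  have hne1 : C ++ [sb] ≠ [] := by simp
  have hne2 : C ++ [sb, sa, sa, none] ≠ [] := by simp
  have hdl1 : (sb :: C ++ [sb]).dropLast = sb :: C := by
    rw [show sb :: C ++ [sb] = (sb :: C) ++ [sb] from rfl, List.dropLast_concat]
  have noneFstCP : ∀ p ∈ CP, p.1 ≠ (none : Option α) := by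
    intro p hp h
    have := pairs_fst_mem hp
    rw [hdl1, h] at this
    simp at this
    exact hCnone this
  have saFstCP : ∀ p ∈ CP, p.1 ≠ sa := by
    intro p hp h
    have := pairs_fst_mem hp
    rw [hdl1, h] at this
    simp at this
    rcases this with h' | h'
    · exact hsbsa h'.symm
    · exact hCsa h'
  have sbCP : ∀ y, (sb, y) ∈ CP → y = (C ++ [sb]).head hne1 := by
    intro y hy
    rw [hCP, show sb :: C ++ [sb] = sb :: (C ++ [sb]) from rfl,
      pairs_cons_ne sb hne1, Multiset.mem_cons] at hy
    rcases hy with h | h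
    · exact (Prod.mk.injEq _ _ _ _ ▸ h).2
    · exfalso
      have := pairs_fst_mem h
      rw [List.dropLast_concat] at this
      exact hCsb this
  -- decomposition of pairs of the inner part
  have hP1 : pairs (sb :: C ++ [sb, sa, sa, none])
      = CP + ((sb, sa) ::ₘ (sa, sa) ::ₘ (sa, none) ::ₘ 0) := by
    have := pairs_middle (sb :: C) sb [sa, sa, none]
    simp only [List.cons_append, List.append_assoc] at this ⊢
    rw [this]; congr 1
  -- Step 1: peel the initial `none`
  have hh0 : L.head? = some none := by rw [hL]; rfl
  have hP0ne : pairs (none :: sb :: (C ++ [sb, sa, sa, none])) ≠ 0 := by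
    rw [pairs_cons_cons]; simp
  obtain ⟨y1, L1, hL1, hp1, hm1⟩ := step' hh0 hbig hP0ne
  have hy1 : y1 = sb := by
    rw [pairs_cons_cons, Multiset.mem_cons] at hm1
    rcases hm1 with h | h
    · exact (Prod.mk.injEq _ _ _ _ ▸ h).2
    · exfalso
      have h2 := pairs_fst_mem h
      have : (sb :: (C ++ [sb, sa, sa, none])).dropLast = sb :: (C ++ [sb, sa, sa]) := by
        rw [show sb :: (C ++ [sb, sa, sa, none]) = (sb :: (C ++ [sb, sa, sa])) ++ [none] by simp,
          List.dropLast_concat]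
      rw [this] at h2
      simp [hC, hsb, hsa] at h2
  subst hy1
  rw [pairs_cons_cons, Multiset.erase_cons_head] at hp1
  -- hp1 : pairs (sb :: L1) = pairs (sb :: C ++ [sb,sa,sa,none])
  -- Step 2: at the first `b0`
  have hh1 : (sb :: L1).head? = some sb := rfl
  have hinne : pairs (sb :: (C ++ [sb, sa, sa, none])) ≠ 0 := by
    rw [pairs_cons_ne sb hne2]; simp
  have hp1' : pairs (sb :: L1) = pairs (sb :: (C ++ [sb, sa, sa, none])) := by
    simpa using hp1
  obtain ⟨y2, L2, hL2, hp2, hm2⟩ := step' hh1 hp1' hinne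
  obtain rfl : L1 = y2 :: L2 := (List.cons.inj hL2).2
  have hcases2 : y2 = (C ++ [sb]).head hne1 ∨ y2 = sa := by
    rw [show pairs (sb :: (C ++ [sb, sa, sa, none])) = pairs (sb :: C ++ [sb, sa, sa, none]) by
      simp, hP1, Multiset.mem_add] at hm2
    rcases hm2 with h | h
    · exact Or.inl (sbCP _ h)
    · simp only [Multiset.mem_cons, Prod.mk.injEq, Multiset.notMem_zero, or_false] at h
      rcases h with ⟨_, h⟩ | h | h
      · exact Or.inr h
      · exact absurd h.1 hsbsa
      · exact absurd h.1 hsbsa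
  rcases hcases2 with hy2 | hy2
  · -- correct branch: follow the chain
    subst hy2
    have hHeq : (C ++ [sb]).head hne1 = (C ++ [sb, sa, sa, none]).head hne2 :=
      head_append_eq C sb [sa, sa, none] hne1 hne2
    have hp2' : pairs ((C ++ [sb]).head hne1 :: L2) = pairs (C ++ [sb, sa, sa, none]) := by
      rw [hp2, pairs_cons_ne sb hne2, ← hHeq, Multiset.erase_cons_head]
    have hh2 : ((C ++ [sb]).head hne1 :: L2).head? = (C ++ [sb, sa, sa, none]).head? := by
      rw [List.head?_cons, hHeq, List.head?_eq_head hne2]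
    have hCnodup : C.Nodup := hnd.map (Option.some_injective α)
    have hCM : ∀ c ∈ C, c ∉ ([sb, sa, sa, none] : List (Option α)).dropLast := by
      intro c hc
      obtain ⟨x, hx, rfl⟩ := List.mem_map.mp (hC ▸ hc)
      have h1 : some x ≠ sb := by
        rw [hsb]; intro h; exact hb (Option.some.inj h ▸ hx)
      have h2 : some x ≠ sa := by
        rw [hsa]; intro h; exact ha (Option.some.inj h ▸ hx)
      simp only [List.dropLast_cons₂, List.dropLast_singleton, List.mem_cons,
        List.not_mem_nil, or_false, List.mem_singleton]
      push_neg
      exact ⟨h1, h2, h2⟩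
    obtain ⟨L3, hL3, hh3, hp3⟩ := chain_peel C (by simp) hCnodup hCM hh2 hp2'
    -- now L3 begins with sb and pairs L3 = pairs [sb,sa,sa,none]
    have hp3' : pairs L3 = (sb, sa) ::ₘ (sa, sa) ::ₘ (sa, none) ::ₘ 0 := by
      rw [hp3]; simp
    have hh3' : L3.head? = some sb := by rw [hh3]; rfl
    obtain ⟨y3, L4, hL4, hp4, hm4⟩ := step' hh3' hp3' (by simp)
    have hy3 : y3 = sa := by
      simp only [Multiset.mem_cons, Prod.mk.injEq, Multiset.notMem_zero, or_false] at hm4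
      rcases hm4 with ⟨_, h⟩ | h | h
      · exact h
      · exact absurd h.1 hsbsa
      · exact absurd h.1 hsbsa
    subst hy3
    rw [Multiset.erase_cons_head] at hp4
    obtain ⟨y4, L5, hL5, hp5, hm5⟩ := step' (rfl : (sa :: L4).head? = some sa) hp4 (by simp)
    simp only [Multiset.mem_cons, Prod.mk.injEq, Multiset.notMem_zero, or_false] at hm5
    rcases hm5 with ⟨_, hy4⟩ | ⟨_, hy4⟩
    · -- y4 = sa : the unique decoding
      subst hy4
      rw [Multiset.erase_cons_head] at hp5
      obtain ⟨y5, L6, hL6, hp6, hm6⟩ := step' (rfl : (sa :: L5).head? = some sa) hp5 (by simp)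
      have hy5 : y5 = none := by
        simp only [Multiset.mem_cons, Prod.mk.injEq, Multiset.notMem_zero, or_false] at hm6
        exact hm6.2
      subst hy5
      rw [Multiset.erase_cons_head] at hp6
      have hend : (none :: L6 : List (Option α)) = [none] :=
        pairs_eq_zero_iff rfl hp6
      have hL6nil : L6 = [] := by simpa using hend
      -- reconstruct L
      have hLfinal : L = none :: sb :: (C ++ [sb, sa, sa, none]) := by
        rw [hL1, hL2, hL3, hL4, hL5, hL6, hL6nil]
      rw [hL] at hLfinal
      have := List.cons.inj hLfinal
      have h7 : List.map some w' ++ [none] = List.map some (b0 :: l ++ [b0, a, a]) ++ [none] := by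
        rw [this.2]; simp [hC, hsb, hsa]
      have h8 := List.append_cancel_right h7
      exact List.map_injective_iff.mpr (Option.some_injective α) h8
    · -- y4 = none : dies
      exfalso
      subst hy4
      have hp5' : pairs (none :: L5) = (sa, sa) ::ₘ 0 := by
        rw [hp5, Multiset.cons_swap, Multiset.erase_cons_head]
      obtain ⟨y5, L6, hL6, hp6, hm6⟩ := step' (rfl : ((none : Option α) :: L5).head? = some none) hp5' (by simp)
      simp [hsa] at hm6
  · -- wrong branch: y2 = sa, dies
    exfalso
    subst hy2
    have hp2' : pairs (sa :: L2) = (sa, sa) ::ₘ (sa, none) ::ₘ CP := by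
      rw [hp2, show pairs (sb :: (C ++ [sb, sa, sa, none])) = pairs (sb :: C ++ [sb, sa, sa, none]) by simp,
        hP1]
      rw [add_comm, Multiset.cons_add, Multiset.erase_cons_head, Multiset.cons_add,
        Multiset.cons_add, zero_add]
    obtain ⟨y3, L3, hL3, hp3, hm3⟩ := step' (rfl : (sa :: L2).head? = some sa) hp2' (by simp)
    simp only [Multiset.mem_cons, Prod.mk.injEq] at hm3
    rcases hm3 with ⟨_, hy3⟩ | ⟨_, hy3⟩ | hy3
    · -- y3 = sa
      subst hy3
      rw [Multiset.erase_cons_head] at hp3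
      obtain ⟨y4, L4, hL4, hp4, hm4⟩ := step' (rfl : (sa :: L3).head? = some sa) hp3 (by simp)
      rw [Multiset.mem_cons] at hm4
      rcases hm4 with h | h
      · obtain hy4 : y4 = none := (Prod.mk.injEq _ _ _ _ ▸ h).2
        subst hy4
        rw [Multiset.erase_cons_head] at hp4
        have hCPne : CP ≠ 0 := by
          rw [hCP, show sb :: C ++ [sb] = sb :: (C ++ [sb]) from rfl, pairs_cons_ne sb hne1]
          simp
        obtain ⟨y5, L5, hL5, hp5, hm5⟩ := step' (rfl : ((none : Option α) :: L4).head? = some none) hp4 hCPne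
        exact noneFstCP _ hm5 rfl
      · exact saFstCP _ h rfl
    · -- y3 = none
      subst hy3
      have hp3' : pairs (none :: L3) = (sa, sa) ::ₘ CP := by
        rw [hp3, Multiset.cons_swap, Multiset.erase_cons_head]
      obtain ⟨y4, L4, hL4, hp4, hm4⟩ := step' (rfl : ((none : Option α) :: L3).head? = some none) hp3' (by simp)
      rw [Multiset.mem_cons] at hm4
      rcases hm4 with h | h
      · exact absurd (Prod.mk.injEq _ _ _ _ ▸ h).1 (by rw [hsa]; simp)
      · exact noneFstCP _ h rfl
    · exact saFstCP _ hy3 rfl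
end uniq

lemma ambig_side (b0 a : α) (p q : List α) (haq : a ∉ q) (hab : a ≠ b0) :
    ¬ UniqDec ((b0 :: p) ++ a :: q ++ [b0, a, a]) := by
  intro h
  have heq : bigrams ((b0 :: p) ++ a :: a :: q ++ [b0, a])
      = bigrams ((b0 :: p) ++ a :: q ++ [b0, a, a]) := by
    rw [bigrams_eq_pairs, bigrams_eq_pairs]
    set sb : Option α := some b0 with hsb
    set sa : Option α := some a with hsa
    set P : List (Option α) := (b0 :: p).map some with hP
    set Q : List (Option α) := q.map some with hQ
    have e1 : (none :: (((b0 :: p) ++ a :: q ++ [b0, a, a]).map some ++ [none]) : List (Option α))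
        = (none :: P) ++ sa :: (Q ++ [sb, sa, sa, none]) := by simp [hP, hQ, hsb, hsa]
    have e2 : (none :: (((b0 :: p) ++ a :: a :: q ++ [b0, a]).map some ++ [none]) : List (Option α))
        = (none :: P) ++ sa :: (sa :: (Q ++ [sb, sa, none])) := by simp [hP, hQ, hsb, hsa]
    rw [e1, e2, pairs_middle (none :: P) sa (Q ++ [sb, sa, sa, none]),
      pairs_middle (none :: P) sa (sa :: (Q ++ [sb, sa, none]))]
    congr 1
    have m1 := pairs_middle (sa :: Q) sb [sa, none]
    have m2 := pairs_middle (sa :: Q) sb [sa, sa, none]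
    simp only [List.cons_append, List.append_assoc] at m1 m2
    rw [pairs_cons_cons, m1, m2]
    simp only [pairs_cons_cons, pairs_single, pairs_nil]
    simp only [← Multiset.singleton_add]
    abel
  have hne : (b0 :: p) ++ a :: a :: q ++ [b0, a] ≠ (b0 :: p) ++ a :: q ++ [b0, a, a] := by
    intro he
    simp only [List.append_assoc, List.cons_append, List.cons.injEq, true_and,
      List.append_cancel_left_eq] at he
    cases q with
    | nil => simp at he; exact hab he.1
    | cons c q' =>
      rw [List.cons_append] at he
      have h4 := (List.cons.inj he).1
      exact haq (h4 ▸ (List.mem_cons_self : c ∈ c :: q'))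
  exact hne (h _ heq)


/-- Any DFA recognizing `L_UNIQ` over an alphabet of size `n ≥ 1` has at least
`2^(n-1)` states; equivalently there are `2^(n-1)` pairwise Myhill–Nerode
inequivalent strings with respect to `L_UNIQ`. -/
theorem stmt17 {α : Type} [Fintype α] [LinearOrder α] (n : ℕ)
    (hcard : Fintype.card α = n) (hn : 1 ≤ n) :
    (∀ (Q : Type) (_ : Fintype Q) (M : DFA α Q),
        M.accepts = {w : List α | UniqDec w} → 2 ^ (n - 1) ≤ Fintype.card Q) ∧
    ∃ D : Finset (List α), D.card = 2 ^ (n - 1) ∧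
      ∀ u ∈ D, ∀ v ∈ D, u ≠ v →
        ∃ t : List α, ¬ (UniqDec (u ++ t) ↔ UniqDec (v ++ t)) := by
  classical
  have hpos : 0 < Fintype.card α := by omega
  have hne : (Finset.univ : Finset α).Nonempty := by
    rw [← Finset.card_pos, Finset.card_univ]; exact hpos
  set b0 : α := Finset.univ.min' hne with hb0
  set D : Finset (List α) :=
    (Finset.univ.erase b0).powerset.image (fun s => b0 :: s.sort (· ≤ ·)) with hD
  have hDcard : D.card = 2 ^ (n - 1) := by
    rw [hD, Finset.card_image_of_injOn, Finset.card_powerset,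
      Finset.card_erase_of_mem (Finset.mem_univ _), Finset.card_univ, hcard]
    intro s _ t _ hst
    have h1 : (s.sort (· ≤ ·)).toFinset = (t.sort (· ≤ ·)).toFinset := by
      rw [(List.cons.inj hst).2]
    rwa [Finset.sort_toFinset, Finset.sort_toFinset] at h1
  -- one-sided distinguishing lemma
  have key1 : ∀ (s r : Finset α), s ⊆ Finset.univ.erase b0 → r ⊆ Finset.univ.erase b0 →
      ∀ a, a ∈ s → a ∉ r →
      ¬ (UniqDec ((b0 :: s.sort (· ≤ ·)) ++ [b0, a, a]) ↔
         UniqDec ((b0 :: r.sort (· ≤ ·)) ++ [b0, a, a])) := by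
    intro s r hs hr a has har hiff
    have hab : a ≠ b0 := (Finset.mem_erase.mp (hs has)).1
    -- the r-side is uniquely decodable
    have huniq : UniqDec ((b0 :: r.sort (· ≤ ·)) ++ [b0, a, a]) := by
      have := uniq_side b0 a (r.sort (· ≤ ·)) (r.sort_nodup _)
        (fun hmem => by
          have := (Finset.mem_erase.mp (hr ((Finset.mem_sort _).mp hmem))).1
          exact this rfl)
        (fun hmem => har ((Finset.mem_sort _).mp hmem)) hab
      simpa using this
    -- the s-side is not
    have hamb : ¬ UniqDec ((b0 :: s.sort (· ≤ ·)) ++ [b0, a, a]) := by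
      have hmem : a ∈ s.sort (· ≤ ·) := (Finset.mem_sort _).mpr has
      obtain ⟨p, q, hpq⟩ := List.append_of_mem hmem
      have hnd : (p ++ a :: q).Nodup := hpq ▸ s.sort_nodup (· ≤ ·)
      have haq : a ∉ q := by
        have := (List.nodup_cons.mp hnd.of_append_right).1
        exact this
      have := ambig_side b0 a p q haq hab
      intro hu
      apply this
      have hshape : (b0 :: p) ++ a :: q ++ [b0, a, a] = (b0 :: s.sort (· ≤ ·)) ++ [b0, a, a] := by
        rw [hpq]; simp
      rwa [hshape]
    exact hamb (hiff.mpr huniq)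
  have hkey : ∀ u ∈ D, ∀ v ∈ D, u ≠ v →
      ∃ t : List α, ¬ (UniqDec (u ++ t) ↔ UniqDec (v ++ t)) := by
    intro u hu v hv huv
    rw [hD, Finset.mem_image] at hu hv
    obtain ⟨s, hs, rfl⟩ := hu
    obtain ⟨r, hr, rfl⟩ := hv
    rw [Finset.mem_powerset] at hs hr
    have hsr : s ≠ r := fun h => huv (by rw [h])
    obtain ⟨a, ha⟩ : ∃ a, ¬ (a ∈ s ↔ a ∈ r) := by
      by_contra hc
      push_neg at hc
      exact hsr (Finset.ext fun x => hc x)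
    have hcase : (a ∈ s ∧ a ∉ r) ∨ (a ∈ r ∧ a ∉ s) := by tauto
    rcases hcase with ⟨h1, h2⟩ | ⟨h1, h2⟩
    · exact ⟨[b0, a, a], key1 s r hs hr a h1 h2⟩
    · exact ⟨[b0, a, a], fun hiff => key1 r s hr hs a h1 h2 hiff.symm⟩
  refine ⟨?_, D, hDcard, hkey⟩
  intro Q fQ M hM
  by_contra hlt
  push_neg at hlt
  have hmaps : ∀ w ∈ D, M.eval w ∈ (Finset.univ : Finset Q) := fun _ _ => Finset.mem_univ _
  obtain ⟨u, hu, v, hv, huv, hfeq⟩ :=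
    Finset.exists_ne_map_eq_of_card_lt_of_maps_to
      (by rw [Finset.card_univ, hDcard]; exact hlt) hmaps
  obtain ⟨t, hdist⟩ := hkey u hu v hv huv
  apply hdist
  have hiff : ∀ w : List α, UniqDec w ↔ w ∈ M.accepts := by
    intro w; rw [hM]; rfl
  rw [hiff, hiff, DFA.mem_accepts, DFA.mem_accepts]
  show M.evalFrom M.start (u ++ t) ∈ M.accept ↔ M.evalFrom M.start (v ++ t) ∈ M.accept
  rw [DFA.evalFrom_of_append, DFA.evalFrom_of_append]
  show M.evalFrom (M.eval u) t ∈ M.accept ↔ M.evalFrom (M.eval v) t ∈ M.accept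
  rw [hfeq]
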